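/- Suppose m⁰₀ < m⁰₁ ≤ m¹₀ < m¹₁ ≤ … ≤ mᵏ₀ < mᵏ₁ are natural numbers and Δᵢ ∈ K^H with all domains of members of Δᵢ contained in the interval [mⁱ₀, mⁱ₁), for i ≤ k. Then hn⁺(⋃_{i≤k} Δᵢ) = min{hn⁺(Δᵢ) : i ≤ k} and hn(⋃_{i≤k} Δᵢ) = min{hn(Δᵢ) : i ≤ k}. -/

import Mathlib

def IsPFun (f : Finset (ℕ × ℕ)) : Prop :=
  ∀ p ∈ f, ∀ q ∈ f, p.1 = q.1 → p = q

def pdom (f : Finset (ℕ × ℕ)) : Finset ℕ := f.image Prod.fst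

/-- `Δ ∈ K^H`: a finite nonempty family of finite partial functions with
nonempty domains and values in `H`. -/
def InKH (H : ℕ → Set ℕ) (Δ : Finset (Finset (ℕ × ℕ))) : Prop :=
  Δ.Nonempty ∧ ∀ f ∈ Δ, IsPFun f ∧ f.Nonempty ∧ ∀ p ∈ f, p.2 ∈ H p.1

/-- A `k`-selector for `Δ`. -/
def IsSelector (Δ : Finset (Finset (ℕ × ℕ))) (k : ℕ)
    (F : Finset (ℕ × ℕ) → Finset ℕ) : Prop :=
  (∀ f ∈ Δ, F f ⊆ pdom f ∧ (F f).card = k) ∧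
  ∀ f ∈ Δ, ∀ g ∈ Δ, f ≠ g → Disjoint (F f) (F g)

/-- `hn⁺(Δ) = max {k+1 : there is a k-selector for Δ}`. -/
noncomputable def hnPlus (Δ : Finset (Finset (ℕ × ℕ))) : ℕ :=
  sSup {m | ∃ k F, IsSelector Δ k F ∧ m = k + 1}

def hnProp (Δ : Finset (Finset (ℕ × ℕ))) (k : ℕ) : Prop :=
  ∀ Δ' ⊆ Δ, ∃ Δ'' ⊆ Δ',
    (∀ f ∈ Δ'', ∀ g ∈ Δ'', f ≠ g → Disjoint (pdom f) (pdom g)) ∧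
    k * Δ'.card ≤ (Δ''.biUnion pdom).card

/-- `hn(Δ)`. -/
noncomputable def hn (Δ : Finset (Finset (ℕ × ℕ))) : ℕ :=
  sSup {m | ∃ k, hnProp Δ k ∧ m = k + 1}

/-- `Δ₀ ⪯ Δ₁`. -/
def Prec (Δ₀ Δ₁ : Finset (Finset (ℕ × ℕ))) : Prop :=
  ∀ f ∈ Δ₀, ∃ g ∈ Δ₁, g ⊆ f

/-- `HN(Δ) = max {hn(Δ') : Δ' ∈ K^H, Δ ⪯ Δ'}`. -/
noncomputable def HN (H : ℕ → Set ℕ) (Δ : Finset (Finset (ℕ × ℕ))) : ℕ :=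
  sSup {m | ∃ Δ', InKH H Δ' ∧ Prec Δ Δ' ∧ m = hn Δ'}

/-! ### Auxiliary lemmas -/

lemma isSelector_zero (Δ : Finset (Finset (ℕ × ℕ))) :
    IsSelector Δ 0 (fun _ => ∅) :=
  ⟨fun _ _ => ⟨Finset.empty_subset _, Finset.card_empty⟩,
   fun _ _ _ _ _ => Finset.disjoint_empty_left _⟩

lemma one_mem_hnPlusSet (Δ : Finset (Finset (ℕ × ℕ))) :
    1 ∈ {m | ∃ k F, IsSelector Δ k F ∧ m = k + 1} :=
  ⟨0, fun _ => ∅, isSelector_zero Δ, rfl⟩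

lemma hnPlusSet_bddAbove {Δ : Finset (Finset (ℕ × ℕ))} (h : Δ.Nonempty) :
    BddAbove {m | ∃ k F, IsSelector Δ k F ∧ m = k + 1} := by
  obtain ⟨f, hf⟩ := h
  refine ⟨(pdom f).card + 1, ?_⟩
  rintro m ⟨k, F, ⟨hF1, _⟩, rfl⟩
  obtain ⟨hsub, hcard⟩ := hF1 f hf
  have : k ≤ (pdom f).card := hcard ▸ Finset.card_le_card hsub
  omega

lemma one_le_hnPlus {Δ : Finset (Finset (ℕ × ℕ))} (h : Δ.Nonempty) :
    1 ≤ hnPlus Δ :=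
  le_csSup (hnPlusSet_bddAbove h) (one_mem_hnPlusSet Δ)

lemma isSelector_subset {Δ Δ' : Finset (Finset (ℕ × ℕ))} {k : ℕ}
    {F : Finset (ℕ × ℕ) → Finset ℕ} (h : IsSelector Δ k F) (hs : Δ' ⊆ Δ) :
    IsSelector Δ' k F :=
  ⟨fun f hf => h.1 f (hs hf), fun f hf g hg => h.2 f (hs hf) g (hs hg)⟩

lemma isSelector_shrink {Δ : Finset (Finset (ℕ × ℕ))} {k : ℕ}
    {F : Finset (ℕ × ℕ) → Finset ℕ} (h : IsSelector Δ k F) {j : ℕ} (hj : j ≤ k) :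
    ∃ F', IsSelector Δ j F' := by
  classical
  set F' : Finset (ℕ × ℕ) → Finset ℕ := fun f =>
    if hc : j ≤ (F f).card then (Finset.exists_subset_card_eq (s := F f) (n := j) hc).choose
    else ∅ with hF'
  have hsub : ∀ f, F' f ⊆ F f := by
    intro f
    by_cases hc : j ≤ (F f).card
    · simp only [hF', dif_pos hc]
      exact (Finset.exists_subset_card_eq (s := F f) (n := j) hc).choose_spec.1
    · simp only [hF', dif_neg hc]
      exact Finset.empty_subset _
  refine ⟨F', ⟨?_, ?_⟩⟩
  · intro f hf
    have hcard : (F f).card = k := (h.1 f hf).2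
    have hc : j ≤ (F f).card := hcard ▸ hj
    constructor
    · exact (hsub f).trans (h.1 f hf).1
    · simp only [hF', dif_pos hc]
      exact (Finset.exists_subset_card_eq (s := F f) (n := j) hc).choose_spec.2
  · intro f hf g hg hfg
    exact ((h.2 f hf g hg hfg).mono (hsub f) (hsub g))

lemma hnProp_zero (Δ : Finset (Finset (ℕ × ℕ))) : hnProp Δ 0 :=
  fun _ _ => ⟨∅, Finset.empty_subset _, by simp, by simp⟩

lemma hnProp_mono_k {Δ : Finset (Finset (ℕ × ℕ))} {j k : ℕ}
    (h : hnProp Δ k) (hj : j ≤ k) : hnProp Δ j := by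
  intro Δ' hΔ'
  obtain ⟨T, hT, hd, hc⟩ := h Δ' hΔ'
  exact ⟨T, hT, hd, le_trans (Nat.mul_le_mul_right _ hj) hc⟩

lemma hnProp_subset {Δ Δ₀ : Finset (Finset (ℕ × ℕ))} {k : ℕ}
    (h : hnProp Δ k) (hs : Δ₀ ⊆ Δ) : hnProp Δ₀ k :=
  fun Δ' hΔ' => h Δ' (hΔ'.trans hs)

lemma one_mem_hnSet (Δ : Finset (Finset (ℕ × ℕ))) :
    1 ∈ {m | ∃ k, hnProp Δ k ∧ m = k + 1} :=
  ⟨0, hnProp_zero Δ, rfl⟩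

lemma hnSet_bddAbove {Δ : Finset (Finset (ℕ × ℕ))} (h : Δ.Nonempty) :
    BddAbove {m | ∃ k, hnProp Δ k ∧ m = k + 1} := by
  refine ⟨(Δ.biUnion pdom).card + 1, ?_⟩
  rintro m ⟨k, hk, rfl⟩
  obtain ⟨T, hT, _, hc⟩ := hk Δ subset_rfl
  have h1 : 1 ≤ Δ.card := Finset.card_pos.mpr h
  have h2 : (T.biUnion pdom).card ≤ (Δ.biUnion pdom).card :=
    Finset.card_le_card (Finset.biUnion_subset_biUnion_of_subset_left _ hT)
  have h3 : k ≤ k * Δ.card := by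
    calc k = k * 1 := (mul_one k).symm
    _ ≤ k * Δ.card := Nat.mul_le_mul_left k h1
  omega

lemma one_le_hn {Δ : Finset (Finset (ℕ × ℕ))} (h : Δ.Nonempty) : 1 ≤ hn Δ :=
  le_csSup (hnSet_bddAbove h) (one_mem_hnSet Δ)

theorem stmt_3 (H : ℕ → Set ℕ) (k : ℕ) (m₀ m₁ : ℕ → ℕ)
    (Δ : ℕ → Finset (Finset (ℕ × ℕ)))
    (hm : ∀ i ≤ k, m₀ i < m₁ i) (hm' : ∀ i < k, m₁ i ≤ m₀ (i + 1))
    (hΔ : ∀ i ≤ k, InKH H (Δ i))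
    (hdom : ∀ i ≤ k, ∀ f ∈ Δ i, pdom f ⊆ Finset.Ico (m₀ i) (m₁ i)) :
    hnPlus ((Finset.range (k + 1)).biUnion Δ) = sInf {n | ∃ i ≤ k, n = hnPlus (Δ i)} ∧
    hn ((Finset.range (k + 1)).biUnion Δ) = sInf {n | ∃ i ≤ k, n = hn (Δ i)} := by
  classical
  set D := (Finset.range (k + 1)).biUnion Δ with hDdef
  -- interval chain
  have hchain : ∀ i j, i < j → j ≤ k → m₁ i ≤ m₀ j := by
    intro i j hij hjk
    induction j with
    | zero => omega
    | succ j ih =>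
      rcases Nat.lt_succ_iff_lt_or_eq.mp hij with h | h
      · have h1 := ih h (by omega)
        have h2 := hm j (by omega)
        have h3 := hm' j (by omega)
        omega
      · subst h
        exact hm' i (by omega)
  have hIco : ∀ i j, i ≤ k → j ≤ k → i ≠ j →
      Disjoint (Finset.Ico (m₀ i) (m₁ i)) (Finset.Ico (m₀ j) (m₁ j)) := by
    intro i j hi hj hne
    rw [Finset.disjoint_left]
    intro x hx hx'
    simp only [Finset.mem_Ico] at hx hx'
    rcases Nat.lt_or_ge i j with h | h
    · have := hchain i j h hj; omega
    · have hji : j < i := lt_of_le_of_ne h (Ne.symm hne)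
      have := hchain j i hji hi; omega
  have hpd : ∀ i j, i ≤ k → j ≤ k → i ≠ j → ∀ f ∈ Δ i, ∀ g ∈ Δ j,
      Disjoint (pdom f) (pdom g) :=
    fun i j hi hj hne f hf g hg =>
      (hIco i j hi hj hne).mono (hdom i hi f hf) (hdom j hj g hg)
  have hpdne : ∀ i, i ≤ k → ∀ f ∈ Δ i, (pdom f).Nonempty := fun i hi f hf =>
    (((hΔ i hi).2 f hf).2.1).image _
  have huniq : ∀ i j, i ≤ k → j ≤ k → ∀ f, f ∈ Δ i → f ∈ Δ j → i = j := by
    intro i j hi hj f hfi hfj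
    by_contra hne
    have hd := hpd i j hi hj hne f hfi f hfj
    have hbot : pdom f = ⊥ := disjoint_self.mp hd
    obtain ⟨x, hx⟩ := hpdne i hi f hfi
    rw [hbot] at hx
    simp at hx
  have hmemD : ∀ f, f ∈ D ↔ ∃ i, i ≤ k ∧ f ∈ Δ i := by
    intro f
    simp [hDdef, Finset.mem_biUnion, Finset.mem_range, Nat.lt_succ_iff]
  have hDne : D.Nonempty := by
    obtain ⟨f, hf⟩ := (hΔ 0 (Nat.zero_le k)).1
    exact ⟨f, (hmemD f).mpr ⟨0, Nat.zero_le k, hf⟩⟩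
  have hsubD : ∀ i, i ≤ k → Δ i ⊆ D := by
    intro i hi f hf
    exact (hmemD f).mpr ⟨i, hi, hf⟩
  constructor
  · -- hnPlus part
    have hSne : {n | ∃ i ≤ k, n = hnPlus (Δ i)}.Nonempty :=
      ⟨hnPlus (Δ 0), 0, Nat.zero_le k, rfl⟩
    apply le_antisymm
    · apply le_csInf hSne
      rintro n ⟨i, hi, rfl⟩
      apply csSup_le ⟨1, one_mem_hnPlusSet D⟩
      rintro m ⟨k', F, hF, rfl⟩
      exact le_csSup (hnPlusSet_bddAbove (hΔ i hi).1)
        ⟨k', F, isSelector_subset hF (hsubD i hi), rfl⟩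
    · set n := sInf {n | ∃ i ≤ k, n = hnPlus (Δ i)} with hn_def
      obtain ⟨i₀, hi₀, hEq⟩ := Nat.sInf_mem hSne
      have hn1 : 1 ≤ n := by
        rw [hn_def, hEq]; exact one_le_hnPlus (hΔ i₀ hi₀).1
      have hsel : ∀ i, ∃ F, i ≤ k → IsSelector (Δ i) (n - 1) F := by
        intro i
        by_cases hi : i ≤ k
        · have hle : n ≤ hnPlus (Δ i) := Nat.sInf_le ⟨i, hi, rfl⟩
          have hmem' : hnPlus (Δ i) ∈ {m | ∃ k' F, IsSelector (Δ i) k' F ∧ m = k' + 1} :=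
            Nat.sSup_mem ⟨1, one_mem_hnPlusSet (Δ i)⟩ (hnPlusSet_bddAbove (hΔ i hi).1)
          obtain ⟨k', F, hF, hk'⟩ := hmem'
          obtain ⟨F', hF'⟩ := isSelector_shrink hF (show n - 1 ≤ k' by omega)
          exact ⟨F', fun _ => hF'⟩
        · exact ⟨fun _ => ∅, fun h => absurd h hi⟩
      choose G hG using hsel
      set idx : Finset (ℕ × ℕ) → ℕ := fun f =>
        if h : ∃ i, i ≤ k ∧ f ∈ Δ i then h.choose else 0 with hidx_def
      have hidx : ∀ i, i ≤ k → ∀ f ∈ Δ i, idx f = i := by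
        intro i hi f hf
        have h : ∃ i, i ≤ k ∧ f ∈ Δ i := ⟨i, hi, hf⟩
        simp only [hidx_def, dif_pos h]
        exact huniq h.choose i h.choose_spec.1 hi f h.choose_spec.2 hf
      set F : Finset (ℕ × ℕ) → Finset ℕ := fun f => G (idx f) f with hFdef
      have hFsel : IsSelector D (n - 1) F := by
        constructor
        · intro f hf
          obtain ⟨i, hi, hfi⟩ := (hmemD f).mp hf
          rw [hFdef]
          simp only
          rw [hidx i hi f hfi]
          exact (hG i hi).1 f hfi
        · intro f hf g hg hfg
          obtain ⟨i, hi, hfi⟩ := (hmemD f).mp hf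
          obtain ⟨j, hj, hgj⟩ := (hmemD g).mp hg
          rw [hFdef]
          simp only
          rw [hidx i hi f hfi, hidx j hj g hgj]
          by_cases hij : i = j
          · subst hij
            exact (hG i hi).2 f hfi g hgj hfg
          · refine (hIco i j hi hj hij).mono ?_ ?_
            · exact ((hG i hi).1 f hfi).1.trans (hdom i hi f hfi)
            · exact ((hG j hj).1 g hgj).1.trans (hdom j hj g hgj)
      have : n ∈ {m | ∃ k' F, IsSelector D k' F ∧ m = k' + 1} :=
        ⟨n - 1, F, hFsel, by omega⟩
      exact le_csSup (hnPlusSet_bddAbove hDne) this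
  · -- hn part
    have hSne : {n | ∃ i ≤ k, n = hn (Δ i)}.Nonempty :=
      ⟨hn (Δ 0), 0, Nat.zero_le k, rfl⟩
    apply le_antisymm
    · apply le_csInf hSne
      rintro n ⟨i, hi, rfl⟩
      apply csSup_le ⟨1, one_mem_hnSet D⟩
      rintro m ⟨k', hk', rfl⟩
      exact le_csSup (hnSet_bddAbove (hΔ i hi).1)
        ⟨k', hnProp_subset hk' (hsubD i hi), rfl⟩
    · set n := sInf {n | ∃ i ≤ k, n = hn (Δ i)} with hn_def
      obtain ⟨i₀, hi₀, hEq⟩ := Nat.sInf_mem hSne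
      have hn1 : 1 ≤ n := by
        rw [hn_def, hEq]; exact one_le_hn (hΔ i₀ hi₀).1
      have hprop : ∀ i, i ≤ k → hnProp (Δ i) (n - 1) := by
        intro i hi
        have hle : n ≤ hn (Δ i) := Nat.sInf_le ⟨i, hi, rfl⟩
        have hmem' : hn (Δ i) ∈ {m | ∃ k', hnProp (Δ i) k' ∧ m = k' + 1} :=
          Nat.sSup_mem ⟨1, one_mem_hnSet (Δ i)⟩ (hnSet_bddAbove (hΔ i hi).1)
        obtain ⟨k', hk', hEq'⟩ := hmem'
        exact hnProp_mono_k hk' (by omega)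
      have hDdisj : ∀ i j, i ≤ k → j ≤ k → i ≠ j → Disjoint (Δ i) (Δ j) := by
        intro i j hi hj hne
        rw [Finset.disjoint_left]
        intro f hfi hfj
        exact hne (huniq i j hi hj f hfi hfj)
      have hpropD : hnProp D (n - 1) := by
        intro Δ' hΔ'
        have hT : ∀ i, ∃ T, i ≤ k → (T ⊆ Δ' ∩ Δ i ∧
            (∀ f ∈ T, ∀ g ∈ T, f ≠ g → Disjoint (pdom f) (pdom g)) ∧
            (n - 1) * (Δ' ∩ Δ i).card ≤ (T.biUnion pdom).card) := by
          intro i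
          by_cases hi : i ≤ k
          · obtain ⟨T, hT1, hT2, hT3⟩ := hprop i hi (Δ' ∩ Δ i) (Finset.inter_subset_right)
            exact ⟨T, fun _ => ⟨hT1, hT2, hT3⟩⟩
          · exact ⟨∅, fun h => absurd h hi⟩
        choose T hTspec using hT
        set Δ'' := (Finset.range (k + 1)).biUnion T with hΔ''def
        have hTsub : ∀ i, i ≤ k → T i ⊆ Δ' ∩ Δ i := fun i hi => (hTspec i hi).1
        refine ⟨Δ'', ?_, ?_, ?_⟩
        · intro f hf
          rw [hΔ''def, Finset.mem_biUnion] at hf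
          obtain ⟨i, hi, hfi⟩ := hf
          rw [Finset.mem_range, Nat.lt_succ_iff] at hi
          exact (Finset.inter_subset_left) (hTsub i hi hfi)
        · intro f hf g hg hfg
          rw [hΔ''def, Finset.mem_biUnion] at hf hg
          obtain ⟨i, hi, hfi⟩ := hf
          obtain ⟨j, hj, hgj⟩ := hg
          rw [Finset.mem_range, Nat.lt_succ_iff] at hi hj
          by_cases hij : i = j
          · subst hij
            exact (hTspec i hi).2.1 f hfi g hgj hfg
          · exact hpd i j hi hj hij f ((Finset.inter_subset_right) (hTsub i hi hfi))
              g ((Finset.inter_subset_right) (hTsub j hj hgj))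
        · -- cardinality bound
          have hcardΔ' : Δ'.card = ∑ i ∈ Finset.range (k + 1), (Δ' ∩ Δ i).card := by
            have hcover : Δ' = (Finset.range (k + 1)).biUnion (fun i => Δ' ∩ Δ i) := by
              apply Finset.Subset.antisymm
              · intro f hf
                obtain ⟨i, hi, hfi⟩ := (hmemD f).mp (hΔ' hf)
                rw [Finset.mem_biUnion]
                exact ⟨i, Finset.mem_range.mpr (by omega), Finset.mem_inter.mpr ⟨hf, hfi⟩⟩
              · intro f hf
                rw [Finset.mem_biUnion] at hf
                obtain ⟨i, _, hfi⟩ := hf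
                exact (Finset.mem_inter.mp hfi).1
            conv_lhs => rw [hcover]
            apply Finset.card_biUnion
            intro i hi j hj hij
            rw [Finset.mem_coe, Finset.mem_range, Nat.lt_succ_iff] at hi hj
            exact Finset.disjoint_left.mpr fun f hfi hfj =>
              hij (huniq i j hi hj f (Finset.mem_inter.mp hfi).2 (Finset.mem_inter.mp hfj).2)
          have hbU : Δ''.biUnion pdom =
              (Finset.range (k + 1)).biUnion (fun i => (T i).biUnion pdom) := by
            rw [hΔ''def]
            exact Finset.biUnion_biUnion _ _ _
          have hTIco : ∀ i, i ≤ k → (T i).biUnion pdom ⊆ Finset.Ico (m₀ i) (m₁ i) := by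
            intro i hi
            apply Finset.biUnion_subset.mpr
            intro f hf
            exact hdom i hi f ((Finset.inter_subset_right) (hTsub i hi hf))
          have hcardU : (Δ''.biUnion pdom).card =
              ∑ i ∈ Finset.range (k + 1), ((T i).biUnion pdom).card := by
            rw [hbU]
            apply Finset.card_biUnion
            intro i hi j hj hij
            rw [Finset.mem_coe, Finset.mem_range, Nat.lt_succ_iff] at hi hj
            exact (hIco i j hi hj hij).mono (hTIco i hi) (hTIco j hj)
          rw [hcardU, hcardΔ', Finset.mul_sum]
          apply Finset.sum_le_sum
          intro i hi
          rw [Finset.mem_range, Nat.lt_succ_iff] at hi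
          exact (hTspec i hi).2.2
      have : n ∈ {m | ∃ k', hnProp D k' ∧ m = k' + 1} :=
        ⟨n - 1, hpropD, by omega⟩
      exact le_csSup (hnSet_bddAbove hDne) this
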